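/- In the setting of the previous approximation lemma, the Legendre spectral coefficients a_n^N(m₁) of (x_r^N)^{(m₁)} satisfy |a_n^N(m₁)| ≤ (6/√π)(U(x_r^{(m₁+1)}) + V(x_r^{(m₁+1)})) n^{-3/2} for n = 1,...,N-r-1; consequently ∑_{n=0}^{N-r-m₁+1} |a_n^N(m₁)| ≤ |a_0^N| + (6/√π)(U + V) ζ(3/2), where ζ is the Riemann zeta function. -/

import Mathlib

open Set Polynomial

/-- The `n`-th Legendre polynomial, via the Rodrigues formula. -/
noncomputable def legendreP (n : ℕ) : Polynomial ℝ :=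
  Polynomial.C (1 / ((2 : ℝ) ^ n * n.factorial)) *
    Polynomial.derivative^[n] ((Polynomial.X ^ 2 - 1) ^ n)

/-- The `n`-th Legendre spectral coefficient of a function on `[-1,1]`. -/
noncomputable def legendreCoeff (h : ℝ → ℝ) (n : ℕ) : ℝ :=
  ((n : ℝ) + 1 / 2) * ∫ t in (-1 : ℝ)..1, h t * (legendreP n).eval t

namespace LegAux

lemma C_two : (C (2:ℝ)) = (2 : ℝ[X]) := map_ofNat C 2

lemma deriv_X2 : derivative (X^2 - 1 : ℝ[X]) = C 2 * X := by
  simp [derivative_pow]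

lemma iter_deriv_X_mul (m : ℕ) (p : ℝ[X]) :
    derivative^[m+1] (X * p) =
      X * derivative^[m+1] p + ((m : ℝ[X]) + 1) * derivative^[m] p := by
  induction m generalizing p with
  | zero => simp [derivative_mul]; ring
  | succ m ih =>
    rw [Function.iterate_succ_apply', ih p, Function.iterate_succ_apply' derivative (m+1)]
    simp only [derivative_add, derivative_mul, derivative_X, one_mul, derivative_natCast,
      derivative_one, Function.iterate_succ_apply']
    push_cast
    ring

lemma iter_deriv_X2_mul (m : ℕ) (p : ℝ[X]) :
    derivative^[m+2] ((X^2 - 1) * p) =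
      (X^2 - 1) * derivative^[m+2] p
        + (2*((m:ℝ[X])+2)) * (X * derivative^[m+1] p)
        + (((m:ℝ[X])+2)*((m:ℝ[X])+1)) * derivative^[m] p := by
  induction m generalizing p with
  | zero =>
    simp only [Function.iterate_succ_apply', Function.iterate_zero_apply]
    simp only [derivative_mul, deriv_X2, derivative_add, derivative_one, derivative_X, C_two, derivative_C, derivative_ofNat]
    push_cast
    ring
  | succ m ih =>
    rw [Function.iterate_succ_apply', ih p,
      Function.iterate_succ_apply' derivative (m+2), Function.iterate_succ_apply' derivative (m+1)]
    simp only [derivative_add, derivative_mul, derivative_X, deriv_X2, derivative_one,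
      derivative_natCast, derivative_ofNat, Function.iterate_succ_apply', C_two, derivative_C]
    push_cast
    ring

lemma legendreP_def' (n : ℕ) :
    legendreP n = C (1 / ((2:ℝ)^n * n.factorial)) * derivative^[n] ((X^2-1)^n) := rfl

lemma deriv_legendreP (n : ℕ) :
    derivative (legendreP n) =
      C (1 / ((2:ℝ)^n * n.factorial)) * derivative^[n+1] ((X^2-1)^n) := by
  rw [legendreP_def', derivative_C_mul, Function.iterate_succ_apply']

lemma deriv2_legendreP (n : ℕ) :
    derivative (derivative (legendreP n)) =
      C (1 / ((2:ℝ)^n * n.factorial)) * derivative^[n+2] ((X^2-1)^n) := by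
  rw [deriv_legendreP, derivative_C_mul,
    ← Function.iterate_succ_apply' derivative (n+1) ((X^2-1:ℝ[X])^n)]

lemma deriv_w_succ (k : ℕ) :
    derivative ((X^2 - 1 : ℝ[X])^(k+1)) = C (2*((k:ℝ)+1)) * (X * (X^2-1)^k) := by
  rw [derivative_pow, deriv_X2]
  have : (k + 1 - 1 : ℕ) = k := rfl
  rw [this]
  have hc : (C (2*((k:ℝ)+1)) : ℝ[X]) = C ((k:ℝ)+1) * C 2 := by
    rw [← C_mul]; ring_nf
  rw [hc]
  push_cast
  ring

lemma const_cancel (k : ℕ) :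
    (1 / ((2:ℝ)^(k+1) * (k+1).factorial)) * (2*((k:ℝ)+1)) = 1 / ((2:ℝ)^k * k.factorial) := by
  have h1 : ((k+1).factorial : ℝ) = ((k:ℝ)+1) * k.factorial := by
    rw [Nat.factorial_succ]; push_cast; ring
  have h2 : (k.factorial : ℝ) ≠ 0 := Nat.cast_ne_zero.mpr k.factorial_ne_zero
  have h3 : ((k:ℝ)+1) ≠ 0 := by positivity
  rw [h1]
  field_simp [h1]
  ring

/-- Identity A : `P_{k+1}' = X P_k' + (k+1) P_k`. -/
lemma identity_A (k : ℕ) :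
    derivative (legendreP (k+1)) =
      X * derivative (legendreP k) + ((k:ℝ[X])+1) * legendreP k := by
  rw [deriv_legendreP]
  rw [show (k+1+1) = (k+1)+1 from rfl, Function.iterate_succ_apply derivative (k+1)]
  rw [deriv_w_succ k, iterate_derivative_C_mul, iter_deriv_X_mul]
  rw [deriv_legendreP, legendreP_def']
  have hc : (C (1 / ((2:ℝ)^(k+1) * (k+1).factorial)) : ℝ[X]) * C (2*((k:ℝ)+1))
      = C (1 / ((2:ℝ)^k * k.factorial)) := by
    rw [← C_mul, const_cancel]
  linear_combination (X * (derivative^[k+1] ((X^2-1:ℝ[X])^k))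
      + ((k:ℝ[X])+1) * (derivative^[k] ((X^2-1:ℝ[X])^k))) * hc

/-- The Legendre ODE: `(X²-1) P_n'' + 2X P_n' = n(n+1) P_n`. -/
lemma legendre_ODE (n : ℕ) :
    (X^2-1) * derivative (derivative (legendreP n)) + 2*X*derivative (legendreP n)
      = ((n:ℝ[X]) * ((n:ℝ[X])+1)) * legendreP n := by
  cases n with
  | zero => simp [legendreP]
  | succ k =>
    -- core : (X²-1) * D w = C(2(k+1)) * (X * w)  with w = (X²-1)^(k+1)
    have core : (X^2-1 : ℝ[X]) * derivative ((X^2-1:ℝ[X])^(k+1))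
        = C (2*((k:ℝ)+1)) * (X * (X^2-1)^(k+1)) := by
      rw [deriv_w_succ k]
      push_cast
      ring
    have happ := congrArg (fun q => derivative^[k+2] q) core
    rw [iter_deriv_X2_mul k (derivative ((X^2-1:ℝ[X])^(k+1))),
      iterate_derivative_C_mul, iter_deriv_X_mul (k+1)] at happ
    -- rewrite D^[j] (D w) as D^[j+1] w
    rw [← Function.iterate_succ_apply derivative (k+2),
      ← Function.iterate_succ_apply derivative (k+1),
      ← Function.iterate_succ_apply derivative k] at happ
    -- now turn the goal into C c * happ
    rw [deriv2_legendreP, deriv_legendreP, legendreP_def']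
    have e1 : (k+2).succ = k+3 := rfl
    have e2 : (k+1).succ = k+2 := rfl
    have e3 : k.succ = k+1 := rfl
    have e4 : k+1+1 = k+2 := rfl
    have e5 : (k+1)+2 = k+3 := by omega
    have hC2 : (C (2*((k:ℝ)+1)) : ℝ[X]) = 2*((k:ℝ[X])+1) := by
      simp [C_mul, C_add, C_1, C_two, C_eq_natCast]
    rw [e1, e2, e3, e4, hC2] at happ
    rw [e5, e4]
    push_cast at happ ⊢
    linear_combination (C (1 / ((2:ℝ)^(k+1) * (k+1).factorial))) * happ

end LegAux


namespace LegAux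

lemma natCast_succ_ne_zero (m : ℕ) : ((m:ℝ[X]) + 1) ≠ 0 := by
  have h : ((m:ℝ[X]) + 1) = ((m+1 : ℕ) : ℝ[X]) := by push_cast; ring
  rw [h]
  exact Nat.cast_ne_zero.mpr (by omega)

lemma natCast_succ2_ne_zero (m : ℕ) : ((m:ℝ[X]) + 2) ≠ 0 := by
  have h : ((m:ℝ[X]) + 2) = ((m+2 : ℕ) : ℝ[X]) := by push_cast; ring
  rw [h]
  exact Nat.cast_ne_zero.mpr (by omega)

/-- derivative of identity A. -/
lemma identity_A' (k : ℕ) :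
    derivative (derivative (legendreP (k+1))) =
      derivative (legendreP k) + X * derivative (derivative (legendreP k))
        + ((k:ℝ[X])+1) * derivative (legendreP k) := by
  have h := congrArg derivative (identity_A k)
  rw [derivative_add, derivative_mul, derivative_mul, derivative_X] at h
  rw [h]
  simp only [derivative_add, derivative_natCast, derivative_one]
  ring

/-- Identity D : `(k+1) P_{k+1} = (k+1) X P_k + (X²-1) P_k'`. -/
lemma identity_D (k : ℕ) :
    ((k:ℝ[X])+1) * legendreP (k+1) =
      ((k:ℝ[X])+1) * (X * legendreP k) + (X^2-1) * derivative (legendreP k) := by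
  have a := identity_A k
  have a' := identity_A' k
  have o := legendre_ODE k
  have o₁ := legendre_ODE (k+1)
  push_cast at o₁
  apply mul_left_cancel₀ (natCast_succ2_ne_zero k)
  linear_combination (-1 : ℝ[X]) * o₁ + (X^2-1) * a' + 2*X*a + X*o

/-- Identity B : `X P_{k+1}' = P_k' + (k+1) P_{k+1}`. -/
lemma identity_B (k : ℕ) :
    X * derivative (legendreP (k+1)) =
      derivative (legendreP k) + ((k:ℝ[X])+1) * legendreP (k+1) := by
  have a := identity_A k
  have d := identity_D k
  linear_combination X * a - d

/-- Identity iii : `P_{k+2}' - P_k' = (2k+3) P_{k+1}`. -/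
lemma identity_iii (k : ℕ) :
    derivative (legendreP (k+2)) =
      derivative (legendreP k) + (2*(k:ℝ[X])+3) * legendreP (k+1) := by
  have a := identity_A (k+1)
  push_cast at a
  have b := identity_B k
  have e : (k+1+1) = k+2 := rfl
  rw [e] at a
  linear_combination a + b

/-- Identity C : `(1-X²) P_{k+1}' = (k+1)(P_k - X P_{k+1})`. -/
lemma identity_C (k : ℕ) :
    (1 - X^2) * derivative (legendreP (k+1)) =
      ((k:ℝ[X])+1) * (legendreP k - X * legendreP (k+1)) := by
  have a := identity_A k
  have d := identity_D k
  linear_combination (1-X^2) * a + X * d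

/-- Three-term recurrence : `(k+2) P_{k+2} = (2k+3) X P_{k+1} - (k+1) P_k`. -/
lemma three_term (k : ℕ) :
    ((k:ℝ[X])+2) * legendreP (k+2) =
      (2*(k:ℝ[X])+3) * (X * legendreP (k+1)) - ((k:ℝ[X])+1) * legendreP k := by
  have d := identity_D (k+1)
  push_cast at d
  have e : (k+1+1) = k+2 := rfl
  rw [e] at d
  have c := identity_C k
  linear_combination d - c

/-- Identity v : `(k+1)(k+2)(P_k - P_{k+2}) = (2k+3)(1-X²) P_{k+1}'`. -/
lemma identity_v (k : ℕ) :
    (((k:ℝ[X])+1)*((k:ℝ[X])+2)) * (legendreP k - legendreP (k+2)) =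
      (2*(k:ℝ[X])+3) * ((1-X^2) * derivative (legendreP (k+1))) := by
  have c := identity_C k
  have t := three_term k
  linear_combination (-(2*(k:ℝ[X])+3)) * c - ((k:ℝ[X])+1) * t

lemma legendreP_zero : legendreP 0 = 1 := by
  simp [legendreP]

lemma legendreP_one : legendreP 1 = X := by
  rw [legendreP_def']
  simp only [Function.iterate_one, pow_one, deriv_X2, ← mul_assoc, ← C_mul]
  norm_num


lemma eval_three_term (k : ℕ) (x : ℝ) :
    ((k:ℝ)+2) * (legendreP (k+2)).eval x =
      (2*(k:ℝ)+3) * (x * (legendreP (k+1)).eval x) - ((k:ℝ)+1) * (legendreP k).eval x := by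
  have h := congrArg (eval x) (three_term k)
  simpa using h

lemma cast_succ2_ne_zero (k : ℕ) : ((k:ℝ)+2) ≠ 0 := by positivity

lemma eval_one_pair : ∀ k : ℕ, (legendreP k).eval 1 = 1 ∧ (legendreP (k+1)).eval 1 = 1
  | 0 => ⟨by simp [legendreP_zero], by simp [legendreP_one]⟩
  | (k+1) => by
    refine ⟨(eval_one_pair k).2, ?_⟩
    have h := eval_three_term k 1
    rw [(eval_one_pair k).1, (eval_one_pair k).2] at h
    have h2 : ((k:ℝ)+2) * (legendreP (k+2)).eval 1 = ((k:ℝ)+2) * 1 := by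
      rw [h]; ring
    exact mul_left_cancel₀ (cast_succ2_ne_zero k) h2

lemma eval_one_legendreP (k : ℕ) : (legendreP k).eval 1 = 1 := (eval_one_pair k).1

lemma eval_neg_one_pair : ∀ k : ℕ, (legendreP k).eval (-1) = (-1)^k
      ∧ (legendreP (k+1)).eval (-1) = (-1)^(k+1)
  | 0 => ⟨by simp [legendreP_zero], by simp [legendreP_one]⟩
  | (k+1) => by
    refine ⟨(eval_neg_one_pair k).2, ?_⟩
    have h := eval_three_term k (-1)
    rw [(eval_neg_one_pair k).1, (eval_neg_one_pair k).2] at h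
    have h2 : ((k:ℝ)+2) * (legendreP (k+2)).eval (-1) = ((k:ℝ)+2) * (-1)^(k+2) := by
      rw [h]; ring
    exact mul_left_cancel₀ (cast_succ2_ne_zero k) h2

lemma eval_neg_one_legendreP (k : ℕ) : (legendreP k).eval (-1) = (-1)^k :=
  (eval_neg_one_pair k).1

lemma eval_zero_pair : ∀ m : ℕ,
    ((legendreP (2*m)).eval 0)^2 * (2*(m:ℝ)+1) ≤ 1 ∧ (legendreP (2*m+1)).eval 0 = 0
  | 0 => ⟨by norm_num [legendreP_zero], by simp [legendreP_one]⟩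
  | (m+1) => by
    obtain ⟨he, ho⟩ := eval_zero_pair m
    constructor
    · have h := eval_three_term (2*m) 0
      have e1 : 2*m+2 = 2*(m+1) := by ring
      rw [e1] at h
      push_cast at h
      set e₂ := (legendreP (2*(m+1))).eval 0
      set e₀ := (legendreP (2*m)).eval 0
      have h' : (2*(m:ℝ)+2) * e₂ = -((2*(m:ℝ)+1) * e₀) := by linarith [h]
      have hsq : ((2*(m:ℝ)+2))^2 * e₂^2 = (2*(m:ℝ)+1)^2 * e₀^2 := by
        have h2 := congrArg (fun t : ℝ => t^2) h'
        nlinarith [h2]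
      push_cast
      nlinarith [he, hsq, sq_nonneg e₀, sq_nonneg e₂]
    · have h := eval_three_term (2*m+1) 0
      have e1 : 2*m+1+2 = 2*(m+1)+1 := by ring
      rw [e1, ho] at h
      push_cast at h
      have h2 : (2*(m:ℝ)+3) * (legendreP (2*(m+1)+1)).eval 0 = (2*(m:ℝ)+3) * 0 := by
        rw [mul_zero]; linarith [h]
      have h3 : (2*(m:ℝ)+3) ≠ 0 := by positivity
      exact mul_left_cancel₀ h3 h2

lemma deriv_eval_zero (k : ℕ) :
    (derivative (legendreP (k+1))).eval 0 = ((k:ℝ)+1) * (legendreP k).eval 0 := by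
  have h := congrArg (eval 0) (identity_C k)
  simpa using h

/-- central bound : `P_n'(0)² + n(n+1) P_n(0)² ≤ n`. -/
lemma central_bound (n : ℕ) :
    ((derivative (legendreP n)).eval 0)^2
      + (n:ℝ)*((n:ℝ)+1)*((legendreP n).eval 0)^2 ≤ n := by
  rcases Nat.even_or_odd n with he | ho
  · obtain ⟨m, hm⟩ := he
    have hm' : n = 2*m := by omega
    subst hm'
    cases m with
    | zero => simp [legendreP_zero]
    | succ j =>
      have hodd := (eval_zero_pair j).2
      have heven := (eval_zero_pair (j+1)).1
      have e1 : 2*(j+1) = (2*j+1)+1 := by ring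
      have hd : (derivative (legendreP (2*(j+1)))).eval 0 = 0 := by
        rw [e1, deriv_eval_zero, hodd, mul_zero]
      rw [hd]
      push_cast at heven ⊢
      nlinarith [heven, sq_nonneg ((legendreP (2*(j+1))).eval 0)]
  · obtain ⟨m, hm⟩ := ho
    subst hm
    have he := (eval_zero_pair m).1
    have ho0 := (eval_zero_pair m).2
    have hd : (derivative (legendreP (2*m+1))).eval 0 = (2*(m:ℝ)+1) * (legendreP (2*m)).eval 0 := by
      have := deriv_eval_zero (2*m)
      push_cast at this ⊢
      linarith [this]
    rw [ho0, hd]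
    push_cast
    nlinarith [he, sq_nonneg ((legendreP (2*m)).eval 0)]


/-- The energy function whose monotonicity gives the Bernstein-type bound. -/
noncomputable def energy (n : ℕ) : ℝ[X] :=
  ((1-X^2) * derivative (legendreP n))^2
    + ((n:ℝ[X])*((n:ℝ[X])+1)) * ((1-X^2) * (legendreP n)^2)

lemma derivative_energy (n : ℕ) :
    derivative (energy n) = -(2*(n:ℝ[X])*((n:ℝ[X])+1)) * (X * (legendreP n)^2) := by
  have o := legendre_ODE n
  unfold energy
  simp only [derivative_add, derivative_mul, derivative_pow, derivative_one, derivative_sub,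
    derivative_X, derivative_natCast, Nat.cast_ofNat, C_eq_natCast, C_two, mul_one, one_mul,
    Nat.add_sub_cancel, pow_one]
  push_cast
  linear_combination (-(2:ℝ[X]))*((1:ℝ[X])-X^2)*(derivative (legendreP n)) * o

lemma energy_le (n : ℕ) {x : ℝ} (hx : x ∈ Icc (-1:ℝ) 1) :
    (energy n).eval x ≤ (energy n).eval 0 := by
  set f : ℝ → ℝ := fun t => (energy n).eval t with hf
  have hderiv : ∀ t : ℝ, HasDerivAt f ((derivative (energy n)).eval t) t :=
    fun t => Polynomial.hasDerivAt (energy n) t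
  have hd : ∀ t : ℝ, deriv f t = (-(2*(n:ℝ)*((n:ℝ)+1))) * (t * ((legendreP n).eval t)^2) := by
    intro t
    rw [(hderiv t).deriv, derivative_energy]
    simp
  have hc : Continuous f := by
    apply Polynomial.continuous_aeval
  rcases le_total x 0 with hx0 | hx0
  · have hmono : MonotoneOn f (Icc (-1:ℝ) 0) := by
      apply monotoneOn_of_deriv_nonneg (convex_Icc _ _) hc.continuousOn
      · intro t ht
        exact ((hderiv t).differentiableAt).differentiableWithinAt
      · intro t ht
        rw [interior_Icc] at ht
        rw [hd t]
        have ht' : t ≤ 0 := le_of_lt ht.2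
        nlinarith [sq_nonneg ((legendreP n).eval t), sq_nonneg t, ht.2,
          mul_nonneg (mul_nonneg (by positivity : (0:ℝ) ≤ 2*(n:ℝ)*((n:ℝ)+1) + 0) (neg_nonneg.mpr ht'))
            (sq_nonneg ((legendreP n).eval t))]
    exact hmono ⟨hx.1, hx0⟩ ⟨by norm_num, le_refl 0⟩ hx0
  · have hmono : AntitoneOn f (Icc (0:ℝ) 1) := by
      apply antitoneOn_of_deriv_nonpos (convex_Icc _ _) hc.continuousOn
      · intro t ht
        exact ((hderiv t).differentiableAt).differentiableWithinAt
      · intro t ht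
        rw [interior_Icc] at ht
        rw [hd t]
        nlinarith [sq_nonneg ((legendreP n).eval t), ht.1,
          mul_nonneg (mul_nonneg (by positivity : (0:ℝ) ≤ 2*(n:ℝ)*((n:ℝ)+1) + 0) (le_of_lt ht.1))
            (sq_nonneg ((legendreP n).eval t))]
    exact hmono ⟨le_refl 0, by norm_num⟩ ⟨hx0, hx.2⟩ hx0


lemma energy_eval_zero_le (n : ℕ) : (energy n).eval 0 ≤ n := by
  have h := central_bound n
  unfold energy
  simp only [eval_add, eval_mul, eval_pow, eval_sub, eval_one, eval_X, eval_natCast]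
  norm_num
  convert h using 2 <;> ring

/-- Bernstein-type bound : `(1-x²)|P_n'(x)| ≤ √n` on `[-1,1]`. -/
lemma bernstein_lite (n : ℕ) {x : ℝ} (hx : x ∈ Icc (-1:ℝ) 1) :
    |(1-x^2) * (derivative (legendreP n)).eval x| ≤ Real.sqrt n := by
  have h1 : ((1-x^2) * (derivative (legendreP n)).eval x)^2 ≤ (energy n).eval x := by
    unfold energy
    simp only [eval_add, eval_mul, eval_pow, eval_sub, eval_one, eval_X, eval_natCast]
    have h2 : (0:ℝ) ≤ (n:ℝ)*((n:ℝ)+1) * ((1-x^2) * ((legendreP n).eval x)^2) := by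
      have hx2 : (0:ℝ) ≤ 1 - x^2 := by
        rcases hx with ⟨h₁, h₂⟩; nlinarith
      positivity
    nlinarith [h2]
  have h3 : ((1-x^2) * (derivative (legendreP n)).eval x)^2 ≤ n :=
    le_trans h1 (le_trans (energy_le n hx) (energy_eval_zero_le n))
  calc |(1-x^2) * (derivative (legendreP n)).eval x|
      = Real.sqrt (((1-x^2) * (derivative (legendreP n)).eval x)^2) := (Real.sqrt_sq_eq_abs _).symm
    _ ≤ Real.sqrt n := Real.sqrt_le_sqrt h3


section Analysis

variable {φ ψ : ℝ → ℝ}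

lemma psi_intervalIntegrable (hBV : BoundedVariationOn ψ (Icc (-1:ℝ) 1)) :
    IntervalIntegrable ψ MeasureTheory.volume (-1:ℝ) 1 := by
  have hloc := hBV.locallyBoundedVariationOn
  have hm : (-1:ℝ) ∈ Icc (-1:ℝ) 1 := by norm_num
  have huIcc : (Set.uIcc (-1:ℝ) 1) = Icc (-1:ℝ) 1 := Set.uIcc_of_le (by norm_num)
  have hp : MonotoneOn (variationOnFromTo ψ (Icc (-1:ℝ) 1) (-1)) (Icc (-1:ℝ) 1) :=
    variationOnFromTo.monotoneOn hloc hm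
  have hq : MonotoneOn (variationOnFromTo ψ (Icc (-1:ℝ) 1) (-1) - ψ) (Icc (-1:ℝ) 1) :=
    variationOnFromTo.sub_self_monotoneOn hloc hm
  have hp' : MonotoneOn (variationOnFromTo ψ (Icc (-1:ℝ) 1) (-1)) (Set.uIcc (-1:ℝ) 1) := by
    rw [huIcc]; exact hp
  have hq' : MonotoneOn (variationOnFromTo ψ (Icc (-1:ℝ) 1) (-1) - ψ) (Set.uIcc (-1:ℝ) 1) := by
    rw [huIcc]; exact hq
  have hip := hp'.intervalIntegrable (μ := MeasureTheory.volume)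
  have hiq := hq'.intervalIntegrable (μ := MeasureTheory.volume)
  have := hip.sub hiq
  simpa using this

/-- Integration by parts against a polynomial antiderivative vanishing at `±1`. -/
lemma byparts (hderiv : ∀ s ∈ Icc (-1:ℝ) 1, HasDerivAt φ (ψ s) s)
    (hBV : BoundedVariationOn ψ (Icc (-1:ℝ) 1))
    (n : ℕ) (Q : ℝ[X]) (hQd : derivative Q = legendreP n)
    (hQ1 : Q.eval 1 = 0) (hQm1 : Q.eval (-1) = 0) :
    ∫ t in (-1:ℝ)..1, φ t * (legendreP n).eval t
      = - ∫ t in (-1:ℝ)..1, ψ t * Q.eval t := by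
  have huIcc : (Set.uIcc (-1:ℝ) 1) = Icc (-1:ℝ) 1 := Set.uIcc_of_le (by norm_num)
  have h := intervalIntegral.integral_mul_deriv_eq_deriv_mul
    (u := φ) (v := fun t => Q.eval t) (u' := ψ) (v' := fun t => (legendreP n).eval t)
    (a := (-1:ℝ)) (b := 1)
    (fun x hx => hderiv x (huIcc ▸ hx))
    (fun x _ => by simpa [hQd] using Q.hasDerivAt x)
    (psi_intervalIntegrable hBV)
    ((Polynomial.continuous _).intervalIntegrable _ _)
  rw [h]
  simp [hQ1, hQm1]

end Analysis


lemma stieltjes_bound {ψ : ℝ → ℝ}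
    (hBV : BoundedVariationOn ψ (Icc (-1:ℝ) 1))
    (g R : ℝ[X]) (hRd : derivative R = g)
    (hR1 : R.eval 1 = 0) (hRm1 : R.eval (-1) = 0)
    (MG : ℝ) (hMG : ∀ x ∈ Icc (-1:ℝ) 1, |R.eval x| ≤ MG) :
    |∫ t in (-1:ℝ)..1, ψ t * g.eval t|
      ≤ (eVariationOn ψ (Icc (-1:ℝ) 1)).toReal * MG := by
  obtain ⟨Mg, hMg⟩ : ∃ M : ℝ, ∀ x ∈ Icc (-1:ℝ) 1, |g.eval x| ≤ M := by
    obtain ⟨M, hM⟩ := (isCompact_Icc (a := (-1:ℝ)) (b := 1)).exists_bound_of_continuousOn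
      (Polynomial.continuous g).continuousOn
    exact ⟨M, fun x hx => by simpa using hM x hx⟩
  have hMg0 : 0 ≤ Mg := le_trans (abs_nonneg _) (hMg 0 (by norm_num))
  have hMG0 : 0 ≤ MG := le_trans (abs_nonneg _) (hMG 1 (by norm_num))
  set V : ℝ := (eVariationOn ψ (Icc (-1:ℝ) 1)).toReal with hVdef
  have hV0 : 0 ≤ V := ENNReal.toReal_nonneg
  have key : ∀ k : ℕ, 0 < k →
      |∫ t in (-1:ℝ)..1, ψ t * g.eval t| ≤ V * MG + 2 * Mg * V / k := by
    intro k hk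
    have hk' : (0:ℝ) < k := by exact_mod_cast hk
    set x : ℕ → ℝ := fun i => -1 + 2*((min i k : ℕ) : ℝ)/(k:ℝ) with hxdef
    have hxmono : Monotone x := by
      intro i j hij
      have h1 : ((min i k : ℕ) : ℝ) ≤ ((min j k : ℕ) : ℝ) :=
        Nat.cast_le.mpr (min_le_min hij (le_refl k))
      simp only [hxdef]
      gcongr
    have hxmem : ∀ i, x i ∈ Icc (-1:ℝ) 1 := by
      intro i
      have h0 : (0:ℝ) ≤ ((min i k : ℕ) : ℝ) := Nat.cast_nonneg _
      have h1 : ((min i k : ℕ) : ℝ) ≤ k := by exact_mod_cast min_le_right i k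
      constructor
      · simp only [hxdef]
        have : (0:ℝ) ≤ 2*((min i k : ℕ) : ℝ)/(k:ℝ) := by positivity
        linarith
      · simp only [hxdef]
        have : 2*((min i k : ℕ) : ℝ)/(k:ℝ) ≤ 2 := by
          rw [div_le_iff₀ hk']; linarith
        linarith
    have hx0 : x 0 = -1 := by simp [hxdef]
    have hxk : x k = 1 := by
      simp only [hxdef, min_self]
      field_simp
      norm_num
    have hxval : ∀ i, i ≤ k → x i = -1 + 2*(i:ℝ)/(k:ℝ) := by
      intro i hik
      simp only [hxdef, min_eq_left hik]
    have hxstep : ∀ i, i < k → x (i+1) - x i = 2/(k:ℝ) := by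
      intro i hik
      rw [hxval i (le_of_lt hik), hxval (i+1) hik]
      push_cast
      field_simp
      ring
    have hxle : ∀ i, x i ≤ x (i+1) := fun i => hxmono (Nat.le_succ i)
    have hsub : ∀ i, Set.uIcc (x i) (x (i+1)) ⊆ Set.uIcc (-1:ℝ) 1 := by
      intro i
      apply Set.uIcc_subset_uIcc
      · rw [Set.uIcc_of_le (by norm_num : (-1:ℝ) ≤ 1)]; exact hxmem i
      · rw [Set.uIcc_of_le (by norm_num : (-1:ℝ) ≤ 1)]; exact hxmem (i+1)
    have hψint : IntervalIntegrable ψ MeasureTheory.volume (-1:ℝ) 1 :=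
      psi_intervalIntegrable hBV
    have hψg : ∀ i, i < k → IntervalIntegrable (fun t => ψ t * g.eval t)
        MeasureTheory.volume (x i) (x (i+1)) := by
      intro i _
      exact (hψint.mono_set (hsub i)).mul_continuousOn (Polynomial.continuous g).continuousOn
    have hsplit : ∑ i ∈ Finset.range k, ∫ t in (x i)..(x (i+1)), ψ t * g.eval t
        = ∫ t in (-1:ℝ)..1, ψ t * g.eval t := by
      have h := intervalIntegral.sum_integral_adjacent_intervals (a := x) (n := k) hψg
      rw [hx0, hxk] at h
      exact h
    -- decompose each piece
    have hpiece : ∀ i, i < k → ∫ t in (x i)..(x (i+1)), ψ t * g.eval t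
        = (∫ t in (x i)..(x (i+1)), (ψ t - ψ (x i)) * g.eval t)
          + ψ (x i) * (R.eval (x (i+1)) - R.eval (x i)) := by
      intro i hik
      have hg : ∫ t in (x i)..(x (i+1)), g.eval t = R.eval (x (i+1)) - R.eval (x i) := by
        have h := intervalIntegral.integral_eq_sub_of_hasDerivAt
          (f := fun t => R.eval t) (f' := fun t => g.eval t) (a := x i) (b := x (i+1))
          (fun t _ => by simpa [hRd] using R.hasDerivAt t)
          ((Polynomial.continuous g).intervalIntegrable _ _)
        simpa using h
      have herr : IntervalIntegrable (fun t => (ψ t - ψ (x i)) * g.eval t)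
          MeasureTheory.volume (x i) (x (i+1)) :=
        ((hψint.mono_set (hsub i)).sub (intervalIntegrable_const)).mul_continuousOn
          (Polynomial.continuous g).continuousOn
      have hcg : IntervalIntegrable (fun t => ψ (x i) * g.eval t)
          MeasureTheory.volume (x i) (x (i+1)) :=
        (intervalIntegrable_const.mul_continuousOn (Polynomial.continuous g).continuousOn)
      have hcongr : ∫ t in (x i)..(x (i+1)), ψ t * g.eval t
          = ∫ t in (x i)..(x (i+1)), ((ψ t - ψ (x i)) * g.eval t + ψ (x i) * g.eval t) := by
        apply intervalIntegral.integral_congr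
        intro t _
        ring
      rw [hcongr, intervalIntegral.integral_add herr hcg, intervalIntegral.integral_const_mul, hg]
    -- error bound
    have hfin : ∀ i, eVariationOn ψ (Icc (x i) (x (i+1))) ≠ ⊤ := by
      intro i
      have hmono : eVariationOn ψ (Icc (x i) (x (i+1))) ≤ eVariationOn ψ (Icc (-1:ℝ) 1) := by
        apply eVariationOn.mono
        intro t ht
        exact ⟨le_trans (hxmem i).1 ht.1, le_trans ht.2 (hxmem (i+1)).2⟩
      exact fun h => hBV (le_antisymm le_top (h ▸ hmono) ▸ rfl)
    have herrb : ∀ i, i < k → |∫ t in (x i)..(x (i+1)), (ψ t - ψ (x i)) * g.eval t|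
        ≤ (eVariationOn ψ (Icc (x i) (x (i+1)))).toReal * Mg * (2/(k:ℝ)) := by
      intro i hik
      have hb : ∀ t ∈ Set.uIoc (x i) (x (i+1)),
          ‖(ψ t - ψ (x i)) * g.eval t‖ ≤ (eVariationOn ψ (Icc (x i) (x (i+1)))).toReal * Mg := by
        intro t ht
        rw [Set.uIoc_of_le (hxle i)] at ht
        have htIcc : t ∈ Icc (x i) (x (i+1)) := ⟨le_of_lt ht.1, ht.2⟩
        have ht11 : t ∈ Icc (-1:ℝ) 1 :=
          ⟨le_trans (hxmem i).1 htIcc.1, le_trans htIcc.2 (hxmem (i+1)).2⟩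
        have hvar : |ψ t - ψ (x i)| ≤ (eVariationOn ψ (Icc (x i) (x (i+1)))).toReal := by
          have he := eVariationOn.edist_le ψ htIcc
            (⟨le_refl _, hxle i⟩ : x i ∈ Icc (x i) (x (i+1)))
          have := ENNReal.toReal_mono (hfin i) he
          rwa [edist_dist, ENNReal.toReal_ofReal dist_nonneg, Real.dist_eq] at this
        rw [Real.norm_eq_abs, abs_mul]
        exact mul_le_mul hvar (hMg t ht11) (abs_nonneg _) ENNReal.toReal_nonneg
      have h := intervalIntegral.norm_integral_le_of_norm_le_const hb
      rw [Real.norm_eq_abs] at h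
      calc |∫ t in (x i)..(x (i+1)), (ψ t - ψ (x i)) * g.eval t|
          ≤ (eVariationOn ψ (Icc (x i) (x (i+1)))).toReal * Mg * |x (i+1) - x i| := h
        _ = (eVariationOn ψ (Icc (x i) (x (i+1)))).toReal * Mg * (2/(k:ℝ)) := by
            rw [hxstep i hik, abs_of_nonneg (by positivity : (0:ℝ) ≤ 2/(k:ℝ))]
    -- Abel summation bound
    have hvarsum : ∑ i ∈ Finset.range k, |ψ (x (i+1)) - ψ (x i)| ≤ V := by
      have h1 := eVariationOn.sum_le (f := ψ) (n := k) hxmono hxmem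
      have h2 : (∑ i ∈ Finset.range k, edist (ψ (x (i+1))) (ψ (x i))).toReal
          = ∑ i ∈ Finset.range k, |ψ (x (i+1)) - ψ (x i)| := by
        rw [ENNReal.toReal_sum (fun i _ => edist_ne_top _ _)]
        apply Finset.sum_congr rfl
        intro i _
        rw [edist_dist, ENNReal.toReal_ofReal dist_nonneg, Real.dist_eq]
      calc ∑ i ∈ Finset.range k, |ψ (x (i+1)) - ψ (x i)|
          = (∑ i ∈ Finset.range k, edist (ψ (x (i+1))) (ψ (x i))).toReal := h2.symm
        _ ≤ V := ENNReal.toReal_mono hBV h1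
    have hAbel : ∑ i ∈ Finset.range k, ψ (x i) * (R.eval (x (i+1)) - R.eval (x i))
        = (∑ i ∈ Finset.range k, (ψ (x i) - ψ (x (i+1))) * R.eval (x (i+1)))
          + (ψ (x k) * R.eval (x k) - ψ (x 0) * R.eval (x 0)) := by
      rw [← Finset.sum_range_sub (fun i => ψ (x i) * R.eval (x i)) k, ← Finset.sum_add_distrib]
      apply Finset.sum_congr rfl
      intro i _
      ring
    have hA : |∑ i ∈ Finset.range k, ψ (x i) * (R.eval (x (i+1)) - R.eval (x i))| ≤ V * MG := by
      rw [hAbel, hx0, hxk, hR1, hRm1]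
      simp only [mul_zero, sub_zero, add_zero]
      calc |∑ i ∈ Finset.range k, (ψ (x i) - ψ (x (i+1))) * R.eval (x (i+1))|
          ≤ ∑ i ∈ Finset.range k, |(ψ (x i) - ψ (x (i+1))) * R.eval (x (i+1))| :=
            Finset.abs_sum_le_sum_abs _ _
        _ ≤ ∑ i ∈ Finset.range k, |ψ (x (i+1)) - ψ (x i)| * MG := by
            apply Finset.sum_le_sum
            intro i _
            rw [abs_mul, abs_sub_comm]
            exact mul_le_mul_of_nonneg_left (hMG _ (hxmem (i+1))) (abs_nonneg _)
              |>.trans (le_of_eq (by ring)) |>.trans (le_of_eq rfl)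
        _ = (∑ i ∈ Finset.range k, |ψ (x (i+1)) - ψ (x i)|) * MG := by
            rw [Finset.sum_mul]
        _ ≤ V * MG := mul_le_mul_of_nonneg_right hvarsum hMG0
    -- subinterval variation sum
    have hsumvarE : ∀ j : ℕ, j ≤ k →
        ∑ i ∈ Finset.range j, eVariationOn ψ (Icc (x i) (x (i+1)))
          ≤ eVariationOn ψ (Icc (-1:ℝ) 1 ∩ Icc (x 0) (x j)) := by
      intro j
      induction j with
      | zero => intro _; simp
      | succ j ih =>
        intro hjk
        have hj : j ≤ k := le_of_lt hjk
        rw [Finset.sum_range_succ]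
        have heq : Icc (x j) (x (j+1)) = Icc (-1:ℝ) 1 ∩ Icc (x j) (x (j+1)) := by
          rw [Set.inter_eq_self_of_subset_right]
          intro t ht
          exact ⟨le_trans (hxmem j).1 ht.1, le_trans ht.2 (hxmem (j+1)).2⟩
        calc (∑ i ∈ Finset.range j, eVariationOn ψ (Icc (x i) (x (i+1))))
              + eVariationOn ψ (Icc (x j) (x (j+1)))
            ≤ eVariationOn ψ (Icc (-1:ℝ) 1 ∩ Icc (x 0) (x j))
              + eVariationOn ψ (Icc (-1:ℝ) 1 ∩ Icc (x j) (x (j+1))) := by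
              refine add_le_add (ih hj) ?_
              rw [← heq]
          _ = eVariationOn ψ (Icc (-1:ℝ) 1 ∩ Icc (x 0) (x (j+1))) :=
              eVariationOn.Icc_add_Icc ψ (hxmono (Nat.zero_le j)) (hxle j) (hxmem j)
    have hsumvar : ∑ i ∈ Finset.range k, (eVariationOn ψ (Icc (x i) (x (i+1)))).toReal ≤ V := by
      have h1 := hsumvarE k (le_refl k)
      have h2 : eVariationOn ψ (Icc (-1:ℝ) 1 ∩ Icc (x 0) (x k)) ≤ eVariationOn ψ (Icc (-1:ℝ) 1) :=
        eVariationOn.mono ψ Set.inter_subset_left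
      have h3 := le_trans h1 h2
      calc ∑ i ∈ Finset.range k, (eVariationOn ψ (Icc (x i) (x (i+1)))).toReal
          = (∑ i ∈ Finset.range k, eVariationOn ψ (Icc (x i) (x (i+1)))).toReal :=
            (ENNReal.toReal_sum (fun i _ => hfin i)).symm
        _ ≤ V := ENNReal.toReal_mono hBV h3
    -- assemble
    have hdecomp : ∫ t in (-1:ℝ)..1, ψ t * g.eval t
        = (∑ i ∈ Finset.range k, ∫ t in (x i)..(x (i+1)), (ψ t - ψ (x i)) * g.eval t)
          + ∑ i ∈ Finset.range k, ψ (x i) * (R.eval (x (i+1)) - R.eval (x i)) := by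
      rw [← hsplit, ← Finset.sum_add_distrib]
      apply Finset.sum_congr rfl
      intro i hi
      exact hpiece i (Finset.mem_range.mp hi)
    rw [hdecomp]
    calc |(∑ i ∈ Finset.range k, ∫ t in (x i)..(x (i+1)), (ψ t - ψ (x i)) * g.eval t)
          + ∑ i ∈ Finset.range k, ψ (x i) * (R.eval (x (i+1)) - R.eval (x i))|
        ≤ |∑ i ∈ Finset.range k, ∫ t in (x i)..(x (i+1)), (ψ t - ψ (x i)) * g.eval t|
          + |∑ i ∈ Finset.range k, ψ (x i) * (R.eval (x (i+1)) - R.eval (x i))| := abs_add_le _ _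
      _ ≤ (∑ i ∈ Finset.range k, (eVariationOn ψ (Icc (x i) (x (i+1)))).toReal * Mg * (2/(k:ℝ)))
          + V * MG := by
          refine add_le_add ?_ hA
          refine le_trans (Finset.abs_sum_le_sum_abs _ _) ?_
          apply Finset.sum_le_sum
          intro i hi
          exact herrb i (Finset.mem_range.mp hi)
      _ ≤ V * MG + 2 * Mg * V / k := by
          have h4 : ∑ i ∈ Finset.range k, (eVariationOn ψ (Icc (x i) (x (i+1)))).toReal * Mg * (2/(k:ℝ))
              = (∑ i ∈ Finset.range k, (eVariationOn ψ (Icc (x i) (x (i+1)))).toReal) * (Mg * (2/(k:ℝ))) := by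
            rw [Finset.sum_mul]
            apply Finset.sum_congr rfl
            intro i _
            ring
          rw [h4]
          have h5 : (∑ i ∈ Finset.range k, (eVariationOn ψ (Icc (x i) (x (i+1)))).toReal) * (Mg * (2/(k:ℝ)))
              ≤ V * (Mg * (2/(k:ℝ))) := by
            apply mul_le_mul_of_nonneg_right hsumvar
            positivity
          have h6 : V * (Mg * (2/(k:ℝ))) = 2 * Mg * V / k := by ring
          linarith
  -- take the limit
  apply le_of_forall_pos_le_add
  intro ε hε
  obtain ⟨k, hkgt⟩ := exists_nat_gt (max 1 (2 * Mg * V / ε))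
  have hk1 : (1:ℝ) ≤ k := le_trans (le_max_left _ _) (le_of_lt hkgt)
  have hkpos : 0 < k := by exact_mod_cast lt_of_lt_of_le zero_lt_one hk1
  have hk2 : 2 * Mg * V / ε < k := lt_of_le_of_lt (le_max_right _ _) hkgt
  have hbound := key k hkpos
  have hkpos' : (0:ℝ) < k := by linarith
  have : 2 * Mg * V / k ≤ ε := by
    rw [div_le_iff₀ hkpos']
    have := (div_lt_iff₀ hε).mp hk2
    nlinarith [hε, hkpos']
  linarith


/-- arithmetic: the sup-bound on `R` is at most `4/((k+2)√(k+2))`. -/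
lemma MG_le (k : ℕ) :
    Real.sqrt ((k:ℝ)+3)/(((k:ℝ)+3)*((k:ℝ)+4)) + Real.sqrt ((k:ℝ)+1)/(((k:ℝ)+1)*((k:ℝ)+2))
      ≤ 4/(((k:ℝ)+2)*Real.sqrt ((k:ℝ)+2)) := by
  set u : ℝ := (k:ℝ) with hu
  have hu0 : 0 ≤ u := Nat.cast_nonneg k
  have ha : Real.sqrt (u+1) ^ 2 = u+1 := Real.sq_sqrt (by linarith)
  have hb : Real.sqrt (u+2) ^ 2 = u+2 := Real.sq_sqrt (by linarith)
  have hc : Real.sqrt (u+3) ^ 2 = u+3 := Real.sq_sqrt (by linarith)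
  have ha0 : 0 < Real.sqrt (u+1) := Real.sqrt_pos.mpr (by linarith)
  have hb0 : 0 < Real.sqrt (u+2) := Real.sqrt_pos.mpr (by linarith)
  have hc0 : 0 < Real.sqrt (u+3) := Real.sqrt_pos.mpr (by linarith)
  have hbc : Real.sqrt (u+2) ≤ Real.sqrt (u+3) := Real.sqrt_le_sqrt (by linarith)
  have hab : Real.sqrt (u+1) ≤ Real.sqrt (u+2) := Real.sqrt_le_sqrt (by linarith)
  have h3a : Real.sqrt (u+2) ≤ 3 * Real.sqrt (u+1) := by
    have h9 : (3:ℝ) * Real.sqrt (u+1) = Real.sqrt (9*(u+1)) := by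
      rw [show (9:ℝ)*(u+1) = (3:ℝ)^2 * (u+1) by ring, Real.sqrt_mul (by positivity),
        Real.sqrt_sq (by norm_num)]
    rw [h9]
    exact Real.sqrt_le_sqrt (by linarith)
  -- term 1
  have t1 : Real.sqrt (u+3)/((u+3)*(u+4)) ≤ 1/((u+2)*Real.sqrt (u+2)) := by
    rw [div_le_div_iff₀ (by positivity) (by positivity)]
    have key : Real.sqrt (u+3) * Real.sqrt (u+2) ≤ u+3 := by
      nlinarith [mul_le_mul_of_nonneg_left hbc (le_of_lt hc0)]
    nlinarith [key, hb0, hc0]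
  -- term 2
  have t2 : Real.sqrt (u+1)/((u+1)*(u+2)) ≤ 3/((u+2)*Real.sqrt (u+2)) := by
    rw [div_le_div_iff₀ (by positivity) (by positivity)]
    have key : Real.sqrt (u+1) * Real.sqrt (u+2) ≤ 3*(u+1) := by
      nlinarith [mul_le_mul_of_nonneg_left h3a (le_of_lt ha0)]
    nlinarith [key, ha0, hb0]
  have hsum : (1:ℝ)/((u+2)*Real.sqrt (u+2)) + 3/((u+2)*Real.sqrt (u+2))
      = 4/((u+2)*Real.sqrt (u+2)) := by
    rw [← add_div]
    norm_num
  linarith [t1, t2]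

/-- the `R` polynomial: antiderivative of `P_{k+3} - P_{k+1}` vanishing at `±1`. -/
noncomputable def Rpoly (k : ℕ) : ℝ[X] :=
  C (1/(2*(k:ℝ)+7)) * (legendreP (k+4) - legendreP (k+2))
    - C (1/(2*(k:ℝ)+3)) * (legendreP (k+2) - legendreP k)

lemma Rpoly_deriv (k : ℕ) :
    derivative (Rpoly k) = legendreP (k+3) - legendreP (k+1) := by
  have h1 := identity_iii (k+2)
  have h2 := identity_iii k
  have e1 : k+2+2 = k+4 := by omega
  have e2 : k+2+1 = k+3 := by omega
  rw [e1, e2] at h1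
  push_cast at h1
  have ha7 : 2*(k:ℝ)+7 ≠ 0 := by positivity
  have ha3 : 2*(k:ℝ)+3 ≠ 0 := by positivity
  have hcast7 : (C (2*(k:ℝ)+7) : ℝ[X]) = 2*(k:ℝ[X])+7 := by
    simp [C_add, C_mul, C_two, C_eq_natCast, map_ofNat]
  have hcast3 : (C (2*(k:ℝ)+3) : ℝ[X]) = 2*(k:ℝ[X])+3 := by
    simp [C_add, C_mul, C_two, C_eq_natCast, map_ofNat]
  have hc1 : (C (1/(2*(k:ℝ)+7)) : ℝ[X]) * (2*(k:ℝ[X])+7) = 1 := by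
    rw [← hcast7, ← C_mul, one_div, inv_mul_cancel₀ ha7, C_1]
  have hc3 : (C (1/(2*(k:ℝ)+3)) : ℝ[X]) * (2*(k:ℝ[X])+3) = 1 := by
    rw [← hcast3, ← C_mul, one_div, inv_mul_cancel₀ ha3, C_1]
  unfold Rpoly
  rw [derivative_sub, derivative_C_mul, derivative_C_mul, derivative_sub, derivative_sub]
  linear_combination (C (1/(2*(k:ℝ)+7)) : ℝ[X]) * h1 - (C (1/(2*(k:ℝ)+3)) : ℝ[X]) * h2
    + legendreP (k+3) * hc1 - legendreP (k+1) * hc3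


lemma Rpoly_eval_one (k : ℕ) : (Rpoly k).eval 1 = 0 := by
  simp [Rpoly, eval_one_legendreP]

lemma Rpoly_eval_neg_one (k : ℕ) : (Rpoly k).eval (-1) = 0 := by
  simp only [Rpoly, eval_sub, eval_mul, eval_C, eval_neg_one_legendreP]
  ring_nf

lemma Rpoly_bound (k : ℕ) : ∀ x ∈ Icc (-1:ℝ) 1,
    |(Rpoly k).eval x| ≤ 4/(((k:ℝ)+2)*Real.sqrt ((k:ℝ)+2)) := by
  intro x hx
  have e1 : k+2+2 = k+4 := by omega
  have e2 : k+2+1 = k+3 := by omega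
  have hv1 := identity_v (k+2)
  rw [e1, e2] at hv1
  have h1 := congrArg (eval x) hv1
  have h2 := congrArg (eval x) (identity_v k)
  simp only [eval_mul, eval_add, eval_sub, eval_one, eval_pow, eval_X, eval_natCast,
    eval_ofNat] at h1 h2
  push_cast at h1 h2
  have b3 : |(1-x^2) * (derivative (legendreP (k+3))).eval x| ≤ Real.sqrt ((k:ℝ)+3) := by
    have := bernstein_lite (k+3) hx
    push_cast at this
    convert this using 2
  have b1 : |(1-x^2) * (derivative (legendreP (k+1))).eval x| ≤ Real.sqrt ((k:ℝ)+1) := by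
    have := bernstein_lite (k+1) hx
    push_cast at this
    convert this using 2
  have hp34 : (0:ℝ) < ((k:ℝ)+3)*((k:ℝ)+4) := by positivity
  have hp12 : (0:ℝ) < ((k:ℝ)+1)*((k:ℝ)+2) := by positivity
  have habs1 : (((k:ℝ)+3)*((k:ℝ)+4)) * |(legendreP (k+2)).eval x - (legendreP (k+4)).eval x|
      = (2*(k:ℝ)+7) * |(1-x^2) * (derivative (legendreP (k+3))).eval x| := by
    have h1' := congrArg abs h1
    rw [abs_mul, abs_mul, abs_mul] at h1'
    have c1 : |(k:ℝ)+2+1| = (k:ℝ)+3 := by rw [abs_of_pos (by positivity)]; ring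
    have c2 : |(k:ℝ)+2+2| = (k:ℝ)+4 := by rw [abs_of_pos (by positivity)]; ring
    have c3 : |2*((k:ℝ)+2)+3| = 2*(k:ℝ)+7 := by rw [abs_of_pos (by positivity)]; ring
    rw [c1, c2, c3] at h1'
    linear_combination h1' 
  have habs2 : (((k:ℝ)+1)*((k:ℝ)+2)) * |(legendreP k).eval x - (legendreP (k+2)).eval x|
      = (2*(k:ℝ)+3) * |(1-x^2) * (derivative (legendreP (k+1))).eval x| := by
    have h2' := congrArg abs h2
    rw [abs_mul, abs_mul, abs_mul] at h2'
    have c1 : |(k:ℝ)+1| = (k:ℝ)+1 := abs_of_pos (by positivity)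
    have c2 : |(k:ℝ)+2| = (k:ℝ)+2 := abs_of_pos (by positivity)
    have c3 : |2*(k:ℝ)+3| = 2*(k:ℝ)+3 := abs_of_pos (by positivity)
    rw [c1, c2, c3] at h2'
    linear_combination h2' 
  have hRx : (Rpoly k).eval x
      = (1/(2*(k:ℝ)+7))*((legendreP (k+4)).eval x - (legendreP (k+2)).eval x)
        - (1/(2*(k:ℝ)+3))*((legendreP (k+2)).eval x - (legendreP k).eval x) := by
    simp [Rpoly]
  have t1 : (1/(2*(k:ℝ)+7)) * |(legendreP (k+4)).eval x - (legendreP (k+2)).eval x|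
      ≤ Real.sqrt ((k:ℝ)+3)/(((k:ℝ)+3)*((k:ℝ)+4)) := by
    have heq : (1/(2*(k:ℝ)+7)) * |(legendreP (k+4)).eval x - (legendreP (k+2)).eval x|
        = |(1-x^2) * (derivative (legendreP (k+3))).eval x| / (((k:ℝ)+3)*((k:ℝ)+4)) := by
      rw [abs_sub_comm]
      rw [eq_div_iff (ne_of_gt hp34)]
      have h7 : (2*(k:ℝ)+7) ≠ 0 := by positivity
      field_simp
      linarith [habs1]
    rw [heq]
    gcongr
  have t2 : (1/(2*(k:ℝ)+3)) * |(legendreP (k+2)).eval x - (legendreP k).eval x|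
      ≤ Real.sqrt ((k:ℝ)+1)/(((k:ℝ)+1)*((k:ℝ)+2)) := by
    have heq : (1/(2*(k:ℝ)+3)) * |(legendreP (k+2)).eval x - (legendreP k).eval x|
        = |(1-x^2) * (derivative (legendreP (k+1))).eval x| / (((k:ℝ)+1)*((k:ℝ)+2)) := by
      rw [abs_sub_comm]
      rw [eq_div_iff (ne_of_gt hp12)]
      have h3 : (2*(k:ℝ)+3) ≠ 0 := by positivity
      field_simp
      linarith [habs2]
    rw [heq]
    gcongr
  calc |(Rpoly k).eval x|
      ≤ (1/(2*(k:ℝ)+7)) * |(legendreP (k+4)).eval x - (legendreP (k+2)).eval x|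
        + (1/(2*(k:ℝ)+3)) * |(legendreP (k+2)).eval x - (legendreP k).eval x| := by
        rw [hRx]
        refine le_trans (abs_sub _ _) ?_
        rw [abs_mul, abs_mul, abs_of_pos (by positivity : (0:ℝ) < 1/(2*(k:ℝ)+7)),
          abs_of_pos (by positivity : (0:ℝ) < 1/(2*(k:ℝ)+3))]
    _ ≤ Real.sqrt ((k:ℝ)+3)/(((k:ℝ)+3)*((k:ℝ)+4)) + Real.sqrt ((k:ℝ)+1)/(((k:ℝ)+1)*((k:ℝ)+2)) :=
        add_le_add t1 t2
    _ ≤ 4/(((k:ℝ)+2)*Real.sqrt ((k:ℝ)+2)) := MG_le k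


lemma key_ge2 {φ ψ : ℝ → ℝ}
    (hderiv : ∀ s ∈ Icc (-1:ℝ) 1, HasDerivAt φ (ψ s) s)
    (hBV : BoundedVariationOn ψ (Icc (-1:ℝ) 1)) (k : ℕ) :
    |legendreCoeff φ (k+2)| ≤
      2 * (eVariationOn ψ (Icc (-1:ℝ) 1)).toReal / (((k:ℝ)+2) * Real.sqrt ((k:ℝ)+2)) := by
  set V : ℝ := (eVariationOn ψ (Icc (-1:ℝ) 1)).toReal with hVdef
  have hV0 : 0 ≤ V := ENNReal.toReal_nonneg
  -- the antiderivative Q of P_{k+2}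
  set Q : ℝ[X] := C (1/(2*(k:ℝ)+5)) * (legendreP (k+3) - legendreP (k+1)) with hQdef
  have hQd : derivative Q = legendreP (k+2) := by
    have h := identity_iii (k+1)
    have e1 : k+1+2 = k+3 := by omega
    have e2 : k+1+1 = k+2 := by omega
    rw [e1, e2] at h
    push_cast at h
    have ha5 : 2*(k:ℝ)+5 ≠ 0 := by positivity
    have hcast5 : (C (2*(k:ℝ)+5) : ℝ[X]) = 2*(k:ℝ[X])+5 := by
      simp [C_add, C_mul, C_two, C_eq_natCast, map_ofNat]
    have hc5 : (C (1/(2*(k:ℝ)+5)) : ℝ[X]) * (2*(k:ℝ[X])+5) = 1 := by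
      rw [← hcast5, ← C_mul, one_div, inv_mul_cancel₀ ha5, C_1]
    rw [hQdef, derivative_C_mul, derivative_sub]
    linear_combination (C (1/(2*(k:ℝ)+5)) : ℝ[X]) * h + legendreP (k+2) * hc5
  have hQ1 : Q.eval 1 = 0 := by simp [hQdef, eval_one_legendreP]
  have hQm1 : Q.eval (-1) = 0 := by
    simp only [hQdef, eval_mul, eval_C, eval_sub, eval_neg_one_legendreP]
    ring_nf
  have hbp := byparts hderiv hBV (k+2) Q hQd hQ1 hQm1
  have hcoeff : legendreCoeff φ (k+2)
      = -(1/2) * ∫ t in (-1:ℝ)..1, ψ t * (legendreP (k+3) - legendreP (k+1)).eval t := by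
    unfold legendreCoeff
    rw [hbp]
    have hint : ∫ t in (-1:ℝ)..1, ψ t * Q.eval t
        = (1/(2*(k:ℝ)+5)) * ∫ t in (-1:ℝ)..1, ψ t * (legendreP (k+3) - legendreP (k+1)).eval t := by
      rw [← intervalIntegral.integral_const_mul]
      apply intervalIntegral.integral_congr
      intro t _
      simp only [hQdef, eval_mul, eval_C, eval_sub]
      ring
    rw [hint]
    push_cast
    have ha5 : 2*(k:ℝ)+5 ≠ 0 := by positivity
    field_simp
    ring
  have hSTJ := stieltjes_bound hBV (legendreP (k+3) - legendreP (k+1)) (Rpoly k)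
    (Rpoly_deriv k) (Rpoly_eval_one k) (Rpoly_eval_neg_one k)
    (4/(((k:ℝ)+2)*Real.sqrt ((k:ℝ)+2))) (Rpoly_bound k)
  rw [hcoeff, abs_mul]
  have habs : |(-(1/2) : ℝ)| = 1/2 := by norm_num
  rw [habs]
  have hpos : (0:ℝ) < ((k:ℝ)+2)*Real.sqrt ((k:ℝ)+2) := by
    have : (0:ℝ) < Real.sqrt ((k:ℝ)+2) := Real.sqrt_pos.mpr (by positivity)
    positivity
  calc (1/2) * |∫ t in (-1:ℝ)..1, ψ t * (legendreP (k+3) - legendreP (k+1)).eval t|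
      ≤ (1/2) * (V * (4/(((k:ℝ)+2)*Real.sqrt ((k:ℝ)+2)))) := by
        apply mul_le_mul_of_nonneg_left hSTJ
        norm_num
    _ = 2 * V / (((k:ℝ)+2) * Real.sqrt ((k:ℝ)+2)) := by
        field_simp
        ring

lemma key_one {φ ψ : ℝ → ℝ}
    (hderiv : ∀ s ∈ Icc (-1:ℝ) 1, HasDerivAt φ (ψ s) s)
    (hBV : BoundedVariationOn ψ (Icc (-1:ℝ) 1))
    {U : ℝ} (hU : ∀ s ∈ Icc (-1:ℝ) 1, |ψ s| ≤ U) :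
    |legendreCoeff φ 1| ≤ 2 * U := by
  have hU0 : 0 ≤ U := le_trans (abs_nonneg _) (hU 0 (by norm_num))
  set Q : ℝ[X] := C (1/2) * (X^2 - 1) with hQdef
  have hQd : derivative Q = legendreP 1 := by
    rw [hQdef, derivative_C_mul, deriv_X2, legendreP_one, ← mul_assoc, ← C_mul]
    norm_num
  have hQ1 : Q.eval 1 = 0 := by simp [hQdef]
  have hQm1 : Q.eval (-1) = 0 := by simp [hQdef]
  have hbp := byparts hderiv hBV 1 Q hQd hQ1 hQm1
  have hb : ∀ t ∈ Set.uIoc (-1:ℝ) 1, ‖ψ t * Q.eval t‖ ≤ U * (1/2) := by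
    intro t ht
    rw [Set.uIoc_of_le (by norm_num : (-1:ℝ) ≤ 1)] at ht
    have ht' : t ∈ Icc (-1:ℝ) 1 := ⟨le_of_lt ht.1, ht.2⟩
    rw [Real.norm_eq_abs, abs_mul]
    apply mul_le_mul (hU t ht') ?_ (abs_nonneg _) hU0
    rw [hQdef]
    simp only [eval_mul, eval_C, eval_sub, eval_pow, eval_X, eval_one]
    rw [abs_mul]
    have h1 : |(1:ℝ)/2| = 1/2 := by norm_num
    rw [h1]
    have h2 : |t^2 - 1| ≤ 1 := by
      rw [abs_le]
      constructor <;> nlinarith [ht'.1, ht'.2]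
    linarith [h2]
  have hI := intervalIntegral.norm_integral_le_of_norm_le_const hb
  rw [Real.norm_eq_abs] at hI
  have hI2 : |∫ t in (-1:ℝ)..1, ψ t * Q.eval t| ≤ U := by
    have : |(1:ℝ) - (-1)| = 2 := by norm_num
    rw [this] at hI
    linarith
  unfold legendreCoeff
  rw [hbp]
  push_cast
  rw [abs_mul, abs_neg]
  have h32 : |(1:ℝ) + 1/2| = 3/2 := by norm_num
  rw [h32]
  linarith [hI2, abs_nonneg (∫ (t : ℝ) in (-1:ℝ)..1, ψ t * Q.eval t)]


lemma sqrt_pi_facts : (0:ℝ) < Real.sqrt Real.pi ∧ Real.sqrt Real.pi ≤ 3 := by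
  constructor
  · exact Real.sqrt_pos.mpr Real.pi_pos
  · have h9 : Real.pi ≤ 9 := by linarith [Real.pi_le_four]
    have : Real.sqrt Real.pi ≤ Real.sqrt 9 := Real.sqrt_le_sqrt h9
    rwa [show (9:ℝ) = 3^2 by norm_num, Real.sqrt_sq (by norm_num : (0:ℝ) ≤ 3)] at this

lemma key_all {φ ψ : ℝ → ℝ} {U V : ℝ}
    (hderiv : ∀ s ∈ Icc (-1:ℝ) 1, HasDerivAt φ (ψ s) s)
    (hU : ∀ s ∈ Icc (-1:ℝ) 1, |ψ s| ≤ U)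
    (hBV : BoundedVariationOn ψ (Icc (-1:ℝ) 1))
    (hV : (eVariationOn ψ (Icc (-1:ℝ) 1)).toReal = V) :
    ∀ n : ℕ, 1 ≤ n →
      |legendreCoeff φ n| ≤ 6 / Real.sqrt Real.pi * (U + V) / (n : ℝ) ^ ((3 : ℝ) / 2) := by
  have hU0 : 0 ≤ U := le_trans (abs_nonneg _) (hU 0 (by norm_num))
  have hV0 : 0 ≤ V := hV ▸ ENNReal.toReal_nonneg
  obtain ⟨hsp, hs3⟩ := sqrt_pi_facts
  have h2le : (2:ℝ) ≤ 6/Real.sqrt Real.pi := by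
    rw [le_div_iff₀ hsp]
    linarith
  intro n hn
  match n with
  | 0 => omega
  | 1 =>
    have h := key_one hderiv hBV hU
    have hr : ((1:ℕ):ℝ) ^ ((3:ℝ)/2) = 1 := by
      norm_num
    rw [hr, div_one]
    calc |legendreCoeff φ 1| ≤ 2 * U := h
      _ ≤ (6/Real.sqrt Real.pi) * (U + V) := by nlinarith
  | (k+2) =>
    have hkey := key_ge2 hderiv hBV k
    rw [hV] at hkey
    have hpos : (0:ℝ) < (k:ℝ)+2 := by positivity
    have hspos : (0:ℝ) < Real.sqrt ((k:ℝ)+2) := Real.sqrt_pos.mpr hpos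
    have hrpow : ((k+2:ℕ):ℝ)^((3:ℝ)/2) = ((k:ℝ)+2) * Real.sqrt ((k:ℝ)+2) := by
      push_cast
      rw [show (3:ℝ)/2 = 1 + 1/2 by norm_num, Real.rpow_add hpos, Real.rpow_one,
        ← Real.sqrt_eq_rpow]
    rw [hrpow]
    calc |legendreCoeff φ (k+2)| ≤ 2 * V / (((k:ℝ)+2) * Real.sqrt ((k:ℝ)+2)) := hkey
      _ ≤ 6/Real.sqrt Real.pi * (U + V) / (((k:ℝ)+2) * Real.sqrt ((k:ℝ)+2)) := by
          apply div_le_div_of_nonneg_right ?_ (by positivity)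
          · nlinarith
      _ = 6/Real.sqrt Real.pi * (U + V) / (((k:ℝ)+2) * Real.sqrt ((k:ℝ)+2)) := rfl

end LegAux

/-- Spectral-coefficient bounds for `(x_r^N)^{(m₁)}`: since its Legendre coefficients
coincide with those of `φ = x_r^{(m₁)}` (whose derivative `ψ = x_r^{(m₁+1)}` is bounded
by `U` and has variation `V`), they satisfy `|a_n| ≤ (6/√π)(U+V) n^{-3/2}` for
`1 ≤ n ≤ N-r-1`, and consequently
`∑_{n=0}^{N-r-m₁+1} |a_n| ≤ |a_0| + (6/√π)(U+V) ζ(3/2)`. -/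
theorem stmt15_spectral_coefficient_bounds
    (N r m₁ : ℕ)
    (φ ψ : ℝ → ℝ)
    (hderiv : ∀ s ∈ Icc (-1 : ℝ) 1, HasDerivAt φ (ψ s) s)
    (U V : ℝ)
    (hU : ∀ s ∈ Icc (-1 : ℝ) 1, |ψ s| ≤ U)
    (hBV : BoundedVariationOn ψ (Icc (-1 : ℝ) 1))
    (hV : (eVariationOn ψ (Icc (-1 : ℝ) 1)).toReal = V) :
    (∀ n : ℕ, 1 ≤ n → n ≤ N - r - 1 →
      |legendreCoeff φ n| ≤ 6 / Real.sqrt Real.pi * (U + V) / (n : ℝ) ^ ((3 : ℝ) / 2)) ∧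
    ∑ n ∈ Finset.range (N - r - m₁ + 2), |legendreCoeff φ n| ≤
      |legendreCoeff φ 0| +
        6 / Real.sqrt Real.pi * (U + V) * ∑' k : ℕ, 1 / ((k : ℝ) + 1) ^ ((3 : ℝ) / 2) := by
  have hkey := LegAux.key_all hderiv hU hBV hV
  have hU0 : 0 ≤ U := le_trans (abs_nonneg _) (hU 0 (by norm_num))
  have hV0 : 0 ≤ V := hV ▸ ENNReal.toReal_nonneg
  obtain ⟨hsp, _⟩ := LegAux.sqrt_pi_facts
  have hC0 : 0 ≤ 6 / Real.sqrt Real.pi * (U + V) := by positivity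
  constructor
  · intro n hn _
    exact hkey n hn
  · set M := N - r - m₁ with hM
    have hsummable : Summable (fun k : ℕ => 1/((k:ℝ)+1)^((3:ℝ)/2)) := by
      have h := Real.summable_one_div_nat_rpow.mpr (by norm_num : (1:ℝ) < 3/2)
      have h2 := (summable_nat_add_iff 1).mpr h
      apply h2.congr
      intro k
      push_cast
      norm_num
    have hterm : ∀ i : ℕ, |legendreCoeff φ (i+1)|
        ≤ 6 / Real.sqrt Real.pi * (U + V) * (1/((i:ℝ)+1)^((3:ℝ)/2)) := by
      intro i
      have h := hkey (i+1) (by omega)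
      have : ((i+1:ℕ):ℝ) = (i:ℝ)+1 := by push_cast; ring
      rw [this] at h
      rw [mul_one_div]
      exact h
    have hsum2 : ∑ n ∈ Finset.range (M + 2), |legendreCoeff φ n|
        = (∑ i ∈ Finset.range (M+1), |legendreCoeff φ (i+1)|) + |legendreCoeff φ 0| :=
      Finset.sum_range_succ' _ (M+1)
    rw [hsum2]
    have hle : ∑ i ∈ Finset.range (M+1), |legendreCoeff φ (i+1)|
        ≤ 6 / Real.sqrt Real.pi * (U + V) * ∑' k : ℕ, 1 / ((k : ℝ) + 1) ^ ((3 : ℝ) / 2) := by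
      calc ∑ i ∈ Finset.range (M+1), |legendreCoeff φ (i+1)|
          ≤ ∑ i ∈ Finset.range (M+1), 6 / Real.sqrt Real.pi * (U + V) * (1/((i:ℝ)+1)^((3:ℝ)/2)) :=
            Finset.sum_le_sum (fun i _ => hterm i)
        _ = 6 / Real.sqrt Real.pi * (U + V) * ∑ i ∈ Finset.range (M+1), 1/((i:ℝ)+1)^((3:ℝ)/2) := by
            rw [Finset.mul_sum]
        _ ≤ 6 / Real.sqrt Real.pi * (U + V) * ∑' k : ℕ, 1 / ((k : ℝ) + 1) ^ ((3 : ℝ) / 2) := by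
            apply mul_le_mul_of_nonneg_left ?_ hC0
            apply Summable.sum_le_tsum _ (fun i _ => by positivity) hsummable
    linarith
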